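/- Assume b := 2αJΦ′(0) < 1 and set a := b/2. Let x_ℓ < 0 < x_r be the negative and positive solutions of 2αJΦ′(x) = a, and set h := min(α/(2(1−α)), 1) · min(|x_ℓ|, x_r). If 0 ≤ p ≤ h and r ∈ ℝ satisfies g_p(r) = 0, then r ≤ 2p/(αJ); and if −h ≤ p ≤ 0 and g_p(r) = 0, then r ≥ 2p/(αJ). -/

import Mathlib

/-- Lemma estrh(b): with a = b/2 and h as defined from the solutions x_ℓ < 0 < x_r
of 2αJΦ′(x) = a, if 0 ≤ p ≤ h and g_p(r) = 0 then r ≤ 2p/(αJ), and if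
−h ≤ p ≤ 0 and g_p(r) = 0 then r ≥ 2p/(αJ). -/
theorem g_zero_upper_bound
    (α J lam : ℝ) (Φ Φ' : ℝ → ℝ)
    (hα : 0 < α) (hα1 : α < 1) (hJ : 0 < J) (hlam : 0 < lam)
    (hmono : Monotone Φ)
    (hbot : Filter.Tendsto Φ Filter.atBot (nhds 0))
    (htop : Filter.Tendsto Φ Filter.atTop (nhds 1))
    (hderiv : ∀ x, HasDerivAt Φ (Φ' x) x)
    (hmax : ∀ x, Φ' x ≤ Φ' 0)
    (hincr : StrictMonoOn Φ' (Set.Iio (0 : ℝ)))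
    (hdecr : StrictAntiOn Φ' (Set.Ioi (0 : ℝ)))
    (hΦ0 : Φ 0 = 1 / 2)
    (b a : ℝ) (hbdef : b = 2 * α * J * Φ' 0) (hb : b < 1) (hadef : a = b / 2)
    (xl xr : ℝ) (hxl : xl < 0) (hxr : 0 < xr)
    (hxla : 2 * α * J * Φ' xl = a) (hxra : 2 * α * J * Φ' xr = a)
    (h : ℝ) (hhdef : h = min (α / (2 * (1 - α))) 1 * min |xl| xr)
    (g : ℝ → ℝ → ℝ)
    (hg : ∀ p d : ℝ, g p d = α * (1 - 2 * Φ (p - J * d)) + (1 - α) * (1 - 2 * Φ p)) :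
    ∀ p r : ℝ, g p r = 0 →
      (0 ≤ p → p ≤ h → r ≤ 2 * p / (α * J)) ∧
      (-h ≤ p → p ≤ 0 → 2 * p / (α * J) ≤ r) := by
  have hαJ : (0:ℝ) < α * J := mul_pos hα hJ
  have hα2 : (0:ℝ) < 2 * (1 - α) := by linarith
  have hdiffAt : ∀ x, DifferentiableAt ℝ Φ x := fun x => (hderiv x).differentiableAt
  have hderiv' : ∀ x, deriv Φ x = Φ' x := fun x => (hderiv x).deriv
  -- Φ' is nonnegative since Φ is monotone
  have hnonneg : ∀ x, 0 ≤ Φ' x := by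
    intro x
    have hs : Filter.Tendsto (slope Φ x) (nhdsWithin x {x}ᶜ) (nhds (Φ' x)) :=
      hasDerivAt_iff_tendsto_slope.1 (hderiv x)
    refine ge_of_tendsto hs ?_
    refine Filter.eventually_of_mem self_mem_nhdsWithin ?_
    intro y hy
    rcases lt_or_gt_of_ne (show y ≠ x from hy) with h1 | h1
    · rw [slope_def_field]
      exact div_nonneg_iff.2 (Or.inr ⟨by linarith [hmono h1.le], by linarith⟩)
    · rw [slope_def_field]
      exact div_nonneg (by linarith [hmono h1.le]) (by linarith)
  -- mean value bounds
  have keyLow : ∀ u v c : ℝ, u ≤ v → (∀ x, u < x → x < v → c ≤ Φ' x) →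
      c * (v - u) ≤ Φ v - Φ u := by
    intro u v c huv hc
    refine (convex_Icc u v).mul_sub_le_image_sub_of_le_deriv
      (fun x _ => (hdiffAt x).continuousAt.continuousWithinAt)
      (fun x _ => (hdiffAt x).differentiableWithinAt)
      ?_ u (Set.left_mem_Icc.2 huv) v (Set.right_mem_Icc.2 huv) huv
    intro x hx
    rw [interior_Icc] at hx
    rw [hderiv']
    exact hc x hx.1 hx.2
  have keyHigh : ∀ u v : ℝ, u ≤ v → Φ v - Φ u ≤ Φ' 0 * (v - u) := by
    intro u v huv
    refine (convex_Icc u v).image_sub_le_mul_sub_of_deriv_le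
      (fun x _ => (hdiffAt x).continuousAt.continuousWithinAt)
      (fun x _ => (hdiffAt x).differentiableWithinAt)
      (fun x _ => by rw [hderiv']; exact hmax x)
      u (Set.left_mem_Icc.2 huv) v (Set.right_mem_Icc.2 huv) huv
  -- Φ' is positive everywhere
  have hpos : ∀ x, 0 < Φ' x := by
    intro x
    rcases lt_trichotomy x 0 with hx | hx | hx
    · have := hincr (Set.mem_Iio.2 (show x - 1 < 0 by linarith)) (Set.mem_Iio.2 hx)
        (by linarith)
      linarith [hnonneg (x - 1)]
    · have h1 := hincr (Set.mem_Iio.2 (show (-1:ℝ) < 0 by norm_num))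
        (Set.mem_Iio.2 (show (-1/2:ℝ) < 0 by norm_num)) (by norm_num)
      have h2 := hmax (-1/2)
      rw [hx]
      linarith [hnonneg (-1)]
    · have := hdecr (Set.mem_Ioi.2 hx) (Set.mem_Ioi.2 (show (0:ℝ) < x + 1 by linarith))
        (by linarith)
      linarith [hnonneg (x + 1)]
  have hSM : StrictMono Φ := strictMono_of_deriv_pos fun x => by
    rw [hderiv']; exact hpos x
  have hne : (2 * α * J : ℝ) ≠ 0 := by positivity
  have hxlval : Φ' xl = Φ' 0 / 2 := by
    have h2 : 2 * α * J * Φ' xl = 2 * α * J * (Φ' 0 / 2) := by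
      rw [hxla, hadef, hbdef]; ring
    exact mul_left_cancel₀ hne h2
  have hxrval : Φ' xr = Φ' 0 / 2 := by
    have h2 : 2 * α * J * Φ' xr = 2 * α * J * (Φ' 0 / 2) := by
      rw [hxra, hadef, hbdef]; ring
    exact mul_left_cancel₀ hne h2
  have hfac : (0:ℝ) ≤ α / (2 * (1 - α)) := div_nonneg hα.le hα2.le
  have hhl : h ≤ α / (2 * (1 - α)) * (-xl) := by
    rw [hhdef, abs_of_neg hxl]
    exact mul_le_mul (min_le_left _ _) (min_le_left _ _)
      (le_min (by linarith) hxr.le) hfac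
  have hhr : h ≤ α / (2 * (1 - α)) * xr := by
    rw [hhdef, abs_of_neg hxl]
    exact mul_le_mul (min_le_left _ _) (min_le_right _ _)
      (le_min (by linarith) hxr.le) hfac
  intro p r hzero
  constructor
  · -- case 0 ≤ p ≤ h
    intro hp0 hph
    have hDq : p - J * (2 * p / (α * J)) = p * (α - 2) / α := by
      field_simp
    set q : ℝ := p * (α - 2) / α with hqdef
    have hq2 : α * q = p * (α - 2) := by
      rw [hqdef]; field_simp
    have hq0 : q ≤ 0 := by
      rw [hqdef]
      exact div_nonpos_of_nonpos_of_nonneg (by nlinarith) hα.le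
    have hA : Φ p - Φ 0 ≤ Φ' 0 * p := by
      have := keyHigh 0 p hp0
      simpa using this
    have hgD : 0 ≤ g p (2 * p / (α * J)) := by
      rw [hg, hDq]
      rw [hΦ0] at hA
      rcases le_or_gt xl q with hc | hc
      · have hB : Φ' 0 / 2 * (0 - q) ≤ Φ 0 - Φ q := by
          apply keyLow q 0 _ hq0
          intro x hx1 hx2
          rw [← hxlval]
          exact (hincr (Set.mem_Iio.2 hxl) (Set.mem_Iio.2 hx2)
            (lt_of_le_of_lt hc hx1)).le
        rw [hΦ0] at hB
        have hq3 : α * q * Φ' 0 = p * (α - 2) * Φ' 0 := by rw [hq2]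
        have T1 := mul_le_mul_of_nonneg_left hB hα.le
        have T2 := mul_le_mul_of_nonneg_left hA (by linarith : (0:ℝ) ≤ 1 - α)
        linarith [mul_nonneg (mul_nonneg hα.le hp0) (hnonneg 0)]
      · have hB : Φ' 0 / 2 * (0 - xl) ≤ Φ 0 - Φ xl := by
          apply keyLow xl 0 _ hxl.le
          intro x hx1 hx2
          rw [← hxlval]
          exact (hincr (Set.mem_Iio.2 hxl) (Set.mem_Iio.2 hx2) hx1).le
        rw [hΦ0] at hB
        have hmq : Φ q ≤ Φ xl := hmono hc.le
        have hpb : 2 * (1 - α) * p ≤ α * (-xl) := by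
          have h5 : 2 * (1 - α) * (α / (2 * (1 - α)) * (-xl)) = α * (-xl) := by
            field_simp [(sub_pos.2 hα1).ne']
            try ring
          have h6 := mul_le_mul_of_nonneg_left (le_trans hph hhl) hα2.le
          linarith
        have T1 := mul_le_mul_of_nonneg_left hB hα.le
        have T2 := mul_le_mul_of_nonneg_left hA (by linarith : (0:ℝ) ≤ 1 - α)
        have T3 := mul_le_mul_of_nonneg_right hpb (hnonneg 0)
        have T4 := mul_le_mul_of_nonneg_left hmq hα.le
        linarith
    -- conclude r ≤ 2p/(αJ)
    by_contra hlt
    push_neg at hlt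
    have h6 : p - J * r < p - J * (2 * p / (α * J)) := by
      have := mul_lt_mul_of_pos_left hlt hJ
      linarith
    have h7 := hSM h6
    rw [hg] at hzero hgD
    have h8 := mul_lt_mul_of_pos_left h7 hα
    linarith
  · -- case -h ≤ p ≤ 0
    intro hp1 hp2
    have hDq : p - J * (2 * p / (α * J)) = p * (α - 2) / α := by
      field_simp
    set q : ℝ := p * (α - 2) / α with hqdef
    have hq2 : α * q = p * (α - 2) := by
      rw [hqdef]; field_simp
    have hq0 : 0 ≤ q := by
      rw [hqdef]
      exact div_nonneg (by nlinarith) hα.le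
    have hA : Φ 0 - Φ p ≤ Φ' 0 * (0 - p) := keyHigh p 0 hp2
    have hgD : g p (2 * p / (α * J)) ≤ 0 := by
      rw [hg, hDq]
      rw [hΦ0] at hA
      rcases le_or_gt q xr with hc | hc
      · have hB : Φ' 0 / 2 * (q - 0) ≤ Φ q - Φ 0 := by
          apply keyLow 0 q _ hq0
          intro x hx1 hx2
          rw [← hxrval]
          exact (hdecr (Set.mem_Ioi.2 hx1) (Set.mem_Ioi.2 hxr) (lt_of_lt_of_le hx2 hc)).le
        rw [hΦ0] at hB
        have hq3 : α * q * Φ' 0 = p * (α - 2) * Φ' 0 := by rw [hq2]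
        have T1 := mul_le_mul_of_nonneg_left hB hα.le
        have T2 := mul_le_mul_of_nonneg_left hA (by linarith : (0:ℝ) ≤ 1 - α)
        linarith [mul_nonneg (mul_nonneg hα.le (neg_nonneg.2 hp2)) (hnonneg 0)]
      · have hB : Φ' 0 / 2 * (xr - 0) ≤ Φ xr - Φ 0 := by
          apply keyLow 0 xr _ hxr.le
          intro x hx1 hx2
          rw [← hxrval]
          exact (hdecr (Set.mem_Ioi.2 hx1) (Set.mem_Ioi.2 hxr) hx2).le
        rw [hΦ0] at hB
        have hmq : Φ xr ≤ Φ q := hmono hc.le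
        have hpb : 2 * (1 - α) * (-p) ≤ α * xr := by
          have h5 : 2 * (1 - α) * (α / (2 * (1 - α)) * xr) = α * xr := by
            field_simp [(sub_pos.2 hα1).ne']
            try ring
          have h6 := mul_le_mul_of_nonneg_left (le_trans (neg_le.1 hp1) hhr) hα2.le
          linarith
        have T1 := mul_le_mul_of_nonneg_left hB hα.le
        have T2 := mul_le_mul_of_nonneg_left hA (by linarith : (0:ℝ) ≤ 1 - α)
        have T3 := mul_le_mul_of_nonneg_right hpb (hnonneg 0)
        have T4 := mul_le_mul_of_nonneg_left hmq hα.le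
        linarith
    by_contra hlt
    push_neg at hlt
    have h6 : p - J * (2 * p / (α * J)) < p - J * r := by
      have := mul_lt_mul_of_pos_left hlt hJ
      linarith
    have h7 := hSM h6
    rw [hg] at hzero hgD
    have h8 := mul_lt_mul_of_pos_left h7 hα
    linarith
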